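/- For every even integer n ≥ 2 and every integer m with 0 ≤ m ≤ n, one has α(n,m) ≤ 10·n^{1/2}. -/

import Mathlib

open scoped Classical

/-- Number of pairs `(ξ, ξ')` of Boolean vectors such that `ξ₁+⋯+ξ_n = 0` and
`ξ₁+⋯+ξ_m+ξ'_{m+1}+⋯+ξ'_n = 0`, where `true ↦ +1` and `false ↦ −1`. -/
def countBoth (n m : ℕ) : ℕ :=
  (Finset.univ.filter fun ξ : (Fin n → Bool) × (Fin n → Bool) =>
    (∑ i : Fin n, (if ξ.1 i then (1 : ℤ) else -1)) = 0 ∧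
    (∑ i : Fin n, (if (i : ℕ) < m then (if ξ.1 i then (1 : ℤ) else -1)
           else (if ξ.2 i then (1 : ℤ) else -1))) = 0).card

/-- Number of Boolean vectors `ξ` with `ξ₁+⋯+ξ_n = 0`, where `true ↦ +1`, `false ↦ −1`. -/
def countZero (n : ℕ) : ℕ :=
  (Finset.univ.filter fun ξ : Fin n → Bool =>
    (∑ i : Fin n, (if ξ i then (1 : ℤ) else -1)) = 0).card

/-- `α(n,m) = P[ξ₁+⋯+ξ_n = 0 ∧ ξ₁+⋯+ξ_m+ξ'_{m+1}+⋯+ξ'_n = 0] / P[ξ₁+⋯+ξ_n = 0]²`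
for i.i.d. Rademacher random variables `ξᵢ, ξ'ᵢ`. -/
noncomputable def alphaCorr (n m : ℕ) : ℝ :=
  ((countBoth n m : ℝ) / 2 ^ (2 * n)) / ((countZero n : ℝ) / 2 ^ n) ^ 2

lemma sum_pm (n : ℕ) (ξ : Fin n → Bool) :
    (∑ i : Fin n, (if ξ i then (1 : ℤ) else -1))
      = 2 * (Finset.univ.filter fun i => ξ i).card - n := by
  have h : ∀ b : Bool, (if b then (1 : ℤ) else -1) = 2 * (if b then 1 else 0) - 1 := by
    intro b; cases b <;> simp
  simp only [h]
  rw [Finset.sum_sub_distrib, ← Finset.mul_sum, Finset.sum_boole]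
  simp

lemma count_card_eq (n k : ℕ) :
    (Finset.univ.filter fun ξ : Fin n → Bool =>
      (Finset.univ.filter fun i => ξ i).card = k).card = n.choose k := by
  rw [show n.choose k = (Finset.univ : Finset (Fin n)).card.choose k by simp,
    ← Finset.card_powersetCard k (Finset.univ : Finset (Fin n))]
  · apply Finset.card_bij (fun ξ _ => Finset.univ.filter fun i => ξ i)
    · intro ξ hξ
      simp only [Finset.mem_filter, Finset.mem_univ, true_and] at hξ
      simp [Finset.mem_powersetCard, hξ]
    · intro a _ b _ hab
      funext i
      have h2 : (i ∈ Finset.univ.filter fun j => a j) ↔ (i ∈ Finset.univ.filter fun j => b j) := by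
        rw [hab]
      simpa using h2
    · intro s hs
      simp only [Finset.mem_powersetCard] at hs
      refine ⟨fun i => i ∈ s, ?_, ?_⟩
      · simp [hs.2]
      · ext i; simp

lemma countZero_eq (n : ℕ) (hn : Even n) : countZero n = n.choose (n / 2) := by
  rw [countZero, ← count_card_eq n (n / 2)]
  congr 1
  apply Finset.filter_congr
  intro ξ _
  rw [sum_pm]
  obtain ⟨k, hk⟩ := hn
  constructor
  · intro h; omega
  · intro h; omega

lemma countBoth_le (n m : ℕ) : countBoth n m ≤ 2 ^ n * countZero n := by
  have h1 : countBoth n m ≤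
      (Finset.univ.filter fun ξ : (Fin n → Bool) × (Fin n → Bool) =>
        (∑ i : Fin n, (if ξ.1 i then (1 : ℤ) else -1)) = 0).card := by
    apply Finset.card_le_card
    intro x hx
    simp only [Finset.mem_filter] at hx ⊢
    exact ⟨hx.1, hx.2.1⟩
  refine h1.trans ?_
  have h2 : (Finset.univ.filter fun ξ : (Fin n → Bool) × (Fin n → Bool) =>
        (∑ i : Fin n, (if ξ.1 i then (1 : ℤ) else -1)) = 0)
      = (Finset.univ.filter fun ξ : Fin n → Bool =>
        (∑ i : Fin n, (if ξ i then (1 : ℤ) else -1)) = 0) ×ˢ Finset.univ := by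
    ext p; simp [Finset.mem_product]
  rw [h2, Finset.card_product, countZero]
  rw [Finset.card_univ]
  simp [mul_comm]

lemma cb_lower (k : ℕ) (hk : 1 ≤ k) : 16 ^ k ≤ 4 * k * (Nat.centralBinom k) ^ 2 := by
  induction k, hk using Nat.le_induction with
  | base => simp [Nat.centralBinom]
  | succ k hk ih =>
    set c := Nat.centralBinom k with hc
    set d := Nat.centralBinom (k + 1) with hd
    have h : (k + 1) * d = 2 * (2 * k + 1) * c := Nat.succ_mul_centralBinom_succ k
    have key : k * (k + 1) ^ 2 * 16 ^ (k + 1) ≤ k * (k + 1) ^ 2 * (4 * (k + 1) * d ^ 2) := by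
      have e1 : k * (k + 1) ^ 2 * (4 * (k + 1) * d ^ 2)
          = 4 * k * (k + 1) * ((k + 1) * d) ^ 2 := by ring
      have e2 : 4 * k * (k + 1) * ((k + 1) * d) ^ 2
          = 16 * k * (k + 1) * (2 * k + 1) ^ 2 * c ^ 2 := by rw [h]; ring
      rw [e1, e2]
      calc k * (k + 1) ^ 2 * 16 ^ (k + 1)
          = 16 * (k + 1) ^ 2 * (k * 16 ^ k) := by rw [pow_succ]; ring
        _ ≤ 16 * (k + 1) ^ 2 * (k * (4 * k * c ^ 2)) := by
            exact Nat.mul_le_mul_left _ (Nat.mul_le_mul_left _ ih)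
        _ = 16 * k * (k + 1) * (4 * k * (k + 1)) * c ^ 2 := by ring
        _ ≤ 16 * k * (k + 1) * (2 * k + 1) ^ 2 * c ^ 2 := by
            apply Nat.mul_le_mul_right
            apply Nat.mul_le_mul_left
            have h3 : 4 * k * (k + 1) + 1 = (2 * k + 1) ^ 2 := by ring
            omega
    have hpos : 0 < k * (k + 1) ^ 2 := by positivity
    exact Nat.le_of_mul_le_mul_left key hpos

/-- For every even `n ≥ 2` and `0 ≤ m ≤ n`, `α(n,m) ≤ 10 √n`. -/
theorem alpha_le_ten_sqrt (n : ℕ) (hn : Even n) (hn2 : 2 ≤ n) (m : ℕ) (hm : m ≤ n) :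
    alphaCorr n m ≤ 10 * Real.sqrt n := by
  obtain ⟨k, hk⟩ := hn
  have hnk : n = 2 * k := by omega
  have hk1 : 1 ≤ k := by omega
  have hZ : countZero n = Nat.centralBinom k := by
    rw [countZero_eq n ⟨k, hk⟩, hnk, Nat.centralBinom]
    congr 1
    omega
  set Z : ℝ := (countZero n : ℝ) with hZdef
  have hZpos : (0 : ℝ) < Z := by
    rw [hZdef, hZ]
    exact_mod_cast Nat.centralBinom_pos k
  -- alphaCorr = countBoth / Z^2
  have halpha : alphaCorr n m = (countBoth n m : ℝ) / Z ^ 2 := by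
    rw [alphaCorr]
    have h2 : ((2:ℝ) ^ n) ≠ 0 := by positivity
    field_simp
    rw [← pow_mul, mul_comm n 2]
    have hc : (countZero n : ℝ) ≠ 0 := hZpos.ne'
    rw [hZdef]
    field_simp
  -- countBoth ≤ 2^n * Z
  have hB : (countBoth n m : ℝ) ≤ 2 ^ n * Z := by
    have := countBoth_le n m
    calc (countBoth n m : ℝ) ≤ ((2 ^ n * countZero n : ℕ) : ℝ) := by exact_mod_cast this
      _ = 2 ^ n * Z := by push_cast; ring
  -- 2^n ≤ sqrt (2n) * Z
  have hsq : ((2 : ℝ) ^ n) ^ 2 ≤ (2 * n) * Z ^ 2 := by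
    have h16 : ((16 : ℕ) ^ k : ℝ) ≤ ((4 * k * (Nat.centralBinom k) ^ 2 : ℕ) : ℝ) := by
      exact_mod_cast cb_lower k hk1
    push_cast at h16
    calc ((2 : ℝ) ^ n) ^ 2 = 16 ^ k := by
          rw [← pow_mul, hnk, show 2 * k * 2 = 4 * k from by ring, pow_mul]
          norm_num
      _ ≤ 4 * k * (Nat.centralBinom k : ℝ) ^ 2 := h16
      _ = (2 * n) * Z ^ 2 := by rw [hZdef, hZ, hnk]; push_cast; ring
  have h2nZ : (2 : ℝ) ^ n ≤ Real.sqrt (2 * n) * Z := by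
    have h1 : (2 : ℝ) ^ n = Real.sqrt (((2 : ℝ) ^ n) ^ 2) := by
      rw [Real.sqrt_sq (by positivity)]
    rw [h1]
    calc Real.sqrt (((2 : ℝ) ^ n) ^ 2) ≤ Real.sqrt ((2 * n) * Z ^ 2) := Real.sqrt_le_sqrt hsq
      _ = Real.sqrt (2 * n) * Z := by
          rw [Real.sqrt_mul (by positivity), Real.sqrt_sq hZpos.le]
  rw [halpha]
  have step1 : (countBoth n m : ℝ) / Z ^ 2 ≤ 2 ^ n / Z := by
    rw [div_le_div_iff₀ (by positivity) hZpos]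
    calc (countBoth n m : ℝ) * Z ≤ (2 ^ n * Z) * Z := by
          apply mul_le_mul_of_nonneg_right hB hZpos.le
      _ = 2 ^ n * Z ^ 2 := by ring
  refine step1.trans ?_
  have step2 : (2 : ℝ) ^ n / Z ≤ Real.sqrt (2 * n) := by
    rw [div_le_iff₀ hZpos]
    exact h2nZ
  refine step2.trans ?_
  have hs2 : Real.sqrt (2 * n) = Real.sqrt 2 * Real.sqrt n := by
    rw [Real.sqrt_mul (by norm_num)]
  rw [hs2]
  apply mul_le_mul_of_nonneg_right _ (Real.sqrt_nonneg _)
  calc Real.sqrt 2 ≤ Real.sqrt 100 := Real.sqrt_le_sqrt (by norm_num)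
    _ = 10 := by
        rw [show (100 : ℝ) = 10 ^ 2 by norm_num, Real.sqrt_sq (by norm_num)]
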